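/- Define the Einstein-frame variables ḡ = α g, dφ̄/dφ = √β/α, V̄(φ̄) = V(φ)/α², with α = 1−ξφ², β = 1+(6ξ−1)ξφ², both nowhere vanishing. Then φ̄ can be integrated explicitly as φ̄ = (−√κ · asinh(√κ φ) + √(ξ+κ) · atanh(φ√(ξ+κ)/√β))/ξ where κ = (6ξ−1)ξ, i.e. the derivative of this expression with respect to φ equals √β/α. -/

import Mathlib

/-- The inverse hyperbolic tangent, `artanh x = ½ log((1+x)/(1−x))`. -/
noncomputable def artanh (x : ℝ) : ℝ := Real.log ((1 + x) / (1 - x)) / 2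

/-- The Einstein-frame scalar field `φ̄`, defined by `dφ̄/dφ = √β/α` with
`α = 1 − ξφ²`, `β = 1 + κφ²`, `κ = (6ξ−1)ξ`, can be integrated explicitly as
`φ̄ = (−√κ asinh(√κ φ) + √(ξ+κ) atanh(φ√(ξ+κ)/√β))/ξ`: the derivative of this
expression with respect to `φ` equals `√β/α`. -/
lemma hasDerivAt_artanh (x : ℝ) (hx : |x| < 1) :
    HasDerivAt artanh (1 / (1 - x ^ 2)) x := by
  obtain ⟨h1, h2⟩ := abs_lt.1 hx
  have p1 : 0 < 1 + x := by linarith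
  have p2 : 0 < 1 - x := by linarith
  have hinner : HasDerivAt (fun y : ℝ => (1 + y) / (1 - y))
      ((1 * (1 - x) - (1 + x) * (-1)) / (1 - x) ^ 2) x := by
    exact (((hasDerivAt_id x).const_add 1)).div
      (((hasDerivAt_id x).neg).const_add 1) (ne_of_gt p2)
  have hpos : (1 + x) / (1 - x) ≠ 0 := ne_of_gt (div_pos p1 p2)
  have hlog := (hinner.log hpos).div_const 2
  have p3 : (0:ℝ) < 1 - x ^ 2 := by nlinarith
  refine hlog.congr_deriv ?_
  field_simp
  ring

theorem einstein_frame_field_integrated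
    (ξ κ : ℝ) (hξ : ξ ≠ 0) (hκdef : κ = (6 * ξ - 1) * ξ) (hκ : 0 ≤ κ)
    (φ : ℝ)
    (hα : 0 < 1 - ξ * φ ^ 2) (hβ : 0 < 1 + κ * φ ^ 2)
    (hdom : |φ * Real.sqrt (ξ + κ)| < Real.sqrt (1 + κ * φ ^ 2)) :
    HasDerivAt (fun p : ℝ =>
        (-(Real.sqrt κ) * Real.arsinh (Real.sqrt κ * p) +
          Real.sqrt (ξ + κ) *
            artanh (p * Real.sqrt (ξ + κ) / Real.sqrt (1 + κ * p ^ 2))) / ξ)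
      (Real.sqrt (1 + κ * φ ^ 2) / (1 - ξ * φ ^ 2)) φ := by
  set s := Real.sqrt κ with hs
  set t := Real.sqrt (ξ + κ) with hts
  set B := Real.sqrt (1 + κ * φ ^ 2) with hBs
  have htk : (0:ℝ) ≤ ξ + κ := by nlinarith [sq_nonneg ξ]
  have hs2 : s ^ 2 = κ := Real.sq_sqrt hκ
  have ht2 : t ^ 2 = ξ + κ := Real.sq_sqrt htk
  have hB : 0 < B := Real.sqrt_pos.2 hβ
  have hB2 : B ^ 2 = 1 + κ * φ ^ 2 := Real.sq_sqrt hβ.le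
  -- first term
  have h1 : HasDerivAt (fun p : ℝ => s * p) s φ := by
    simpa using (hasDerivAt_id φ).const_mul s
  have h2 : HasDerivAt (fun p : ℝ => Real.arsinh (s * p)) (s / B) φ := by
    have := (Real.hasDerivAt_arsinh (s * φ)).comp φ h1
    refine this.congr_deriv ?_
    rw [mul_pow, hs2]
    rw [← hBs]
    ring
  have hterm1 : HasDerivAt (fun p : ℝ => -s * Real.arsinh (s * p)) (-s * (s / B)) φ :=
    h2.const_mul (-s)
  -- inner function of artanh
  have hpoly : HasDerivAt (fun p : ℝ => 1 + κ * p ^ 2) (2 * κ * φ) φ := by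
    have := ((hasDerivAt_pow 2 φ).const_mul κ).const_add 1
    refine this.congr_deriv ?_
    ring
  have hden : HasDerivAt (fun p : ℝ => Real.sqrt (1 + κ * p ^ 2)) (κ * φ / B) φ := by
    have := (Real.hasDerivAt_sqrt (ne_of_gt hβ)).comp φ hpoly
    refine this.congr_deriv ?_
    rw [← hBs]
    field_simp
  have hnum : HasDerivAt (fun p : ℝ => p * t) t φ := by
    simpa using (hasDerivAt_id φ).mul_const t
  have hu : HasDerivAt (fun p : ℝ => p * t / Real.sqrt (1 + κ * p ^ 2))
      (t / B ^ 3) φ := by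
    have := hnum.div hden (by rw [← hBs]; exact ne_of_gt hB)
    refine this.congr_deriv ?_
    rw [← hBs]
    field_simp
    linear_combination t * hB2
  have hxlt : |φ * t / B| < 1 := by
    rw [abs_div, abs_of_pos hB, div_lt_one hB]
    exact hdom
  have h3 : HasDerivAt (fun p : ℝ =>
      artanh (p * t / Real.sqrt (1 + κ * p ^ 2)))
      (1 / (1 - (φ * t / B) ^ 2) * (t / B ^ 3)) φ := by
    have := (hasDerivAt_artanh (φ * t / B) hxlt).comp φ hu
    exact this
  have hterm2 := h3.const_mul t
  have hsum := (hterm1.add hterm2).div_const ξ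
  refine hsum.congr_deriv ?_
  -- arithmetic
  have hα' : (1 - ξ * φ ^ 2) ≠ 0 := ne_of_gt hα
  have huval : 1 - (φ * t / B) ^ 2 = (1 - ξ * φ ^ 2) / (1 + κ * φ ^ 2) := by
    rw [div_pow, hB2]
    field_simp
    linear_combination (-(φ ^ 2)) * ht2
  rw [huval]
  have hB3 : B ^ 3 = B * (1 + κ * φ ^ 2) := by
    rw [pow_succ, hB2, mul_comm]
  have e1 : -s * (s / B) = -κ / B := by
    rw [← hs2]; ring
  have e2 : t * (1 / ((1 - ξ * φ ^ 2) / (1 + κ * φ ^ 2)) * (t / B ^ 3)) =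
      (ξ + κ) / (B * (1 - ξ * φ ^ 2)) := by
    rw [← ht2, hB3]
    field_simp
  rw [e1, e2]
  field_simp
  linear_combination (-ξ) * hB2
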